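/- On the elliptic curve E: y^2 = x^3 + 503844x - 45019744 over ℚ, the point P = (88, 0) is a 2-torsion point, its 2-division polynomial d_{2,P}(x) = φ_2(x) - 88·ψ_2^2(x) factors as ((x - 814)(x + 638))^2 up to a constant, yet neither 814 nor -638 is the x-coordinate of a rational point on E; hence P is not divisible by 2 in E(ℚ) even though d_{2,P} has rational roots. -/

import Mathlib

open Polynomial

/-- The elliptic curve `y² = x³ + 503844x - 45019744` over `ℚ`. -/
noncomputable def Wex : WeierstrassCurve ℚ := ⟨0, 0, 0, 503844, -45019744⟩

/-- On `E : y² = x³ + 503844x - 45019744` over `ℚ`, the point `P = (88, 0)` is a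
nonsingular `2`-torsion point, its `2`-division polynomial
`d_{2,P}(x) = φ₂(x) - 88·ψ₂²(x)` (with `φ₂(x) = x⁴ - 2Ax² - 8Bx + A²` and
`ψ₂²(x) = 4(x³ + Ax + B)`) equals `((x - 814)(x + 638))²`, yet neither `814` nor `-638`
is the `x`-coordinate of a rational point on `E`; hence `P` is not divisible by `2` in
`E(ℚ)` even though `d_{2,P}` has rational roots. -/
theorem two_torsion_division_polynomial_counterexample :
    ∃ h : Wex.toAffine.Nonsingular 88 0,
      (WeierstrassCurve.Affine.Point.some 88 0 h + WeierstrassCurve.Affine.Point.some 88 0 h = 0) ∧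
      (∀ x : ℚ,
        (x ^ 4 - 2 * 503844 * x ^ 2 - 8 * (-45019744) * x + 503844 ^ 2)
            - 88 * (4 * (x ^ 3 + 503844 * x + (-45019744)))
          = ((x - 814) * (x + 638)) ^ 2) ∧
      (∀ y : ℚ, ¬ Wex.toAffine.Equation 814 y ∧ ¬ Wex.toAffine.Equation (-638) y) ∧
      ¬ ∃ Q : Wex.toAffine.Point, Q + Q = WeierstrassCurve.Affine.Point.some 88 0 h := by
  have hP : Wex.toAffine.Nonsingular 88 0 := by
    rw [WeierstrassCurve.Affine.nonsingular_iff, WeierstrassCurve.Affine.equation_iff]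
    constructor <;> norm_num [Wex]
  have hroots : ∀ y : ℚ, ¬ Wex.toAffine.Equation 814 y ∧ ¬ Wex.toAffine.Equation (-638) y := by
    intro y
    constructor
    · rw [WeierstrassCurve.Affine.equation_iff]
      norm_num [Wex]
      intro h
      have hsq : IsSquare ((904462416 : ℕ) : ℚ) := ⟨y, by push_cast; linarith [sq y ▸ h]⟩
      rw [Rat.isSquare_natCast_iff] at hsq
      obtain ⟨r, hr⟩ := hsq
      have h1 : r < 30075 := by nlinarith
      have h2 : 30074 < r := by nlinarith
      omega
    · rw [WeierstrassCurve.Affine.equation_iff]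
      norm_num [Wex]
      nlinarith [sq_nonneg y]
  refine ⟨hP, ?_, ?_, hroots, ?_⟩
  · exact WeierstrassCurve.Affine.Point.add_self_of_Y_eq
      (by norm_num [WeierstrassCurve.Affine.negY, Wex])
  · intro x; ring
  · rintro ⟨Q, hQ⟩
    rcases Q with _ | @⟨x, y, h1⟩
    · exact WeierstrassCurve.Affine.Point.some_ne_zero hP
        (((zero_add (0 : Wex.toAffine.Point)).symm.trans hQ).symm)
    · by_cases hy : y = Wex.toAffine.negY x y
      · rw [WeierstrassCurve.Affine.Point.add_self_of_Y_eq hy] at hQ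
        exact WeierstrassCurve.Affine.Point.some_ne_zero hP hQ.symm
      · rw [WeierstrassCurve.Affine.Point.add_self_of_Y_ne hy] at hQ
        injection hQ with hX hrest
        have hy0 : y ≠ 0 := by
          intro h0; apply hy; simp [WeierstrassCurve.Affine.negY, Wex, h0]
        have hyy : y + y ≠ 0 := by
          intro h0; exact hy0 (by linarith [h0])
        have heq : y ^ 2 = x ^ 3 + 503844 * x - 45019744 := by
          have := h1.1
          rw [WeierstrassCurve.Affine.equation_iff] at this
          norm_num [Wex] at this
          linarith
        rw [WeierstrassCurve.Affine.slope_of_Y_ne rfl hy] at hX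
        simp only [WeierstrassCurve.Affine.addX, WeierstrassCurve.Affine.negY, Wex] at hX
        norm_num at hX
        have hX'' : (3 * x ^ 2 + 503844) ^ 2 = (88 + 2 * x) * (y + y) ^ 2 := by
          field_simp at hX
          linear_combination hX
        have key : ((x - 814) * (x + 638)) ^ 2 = 0 := by
          linear_combination hX'' + 4 * (88 + 2 * x) * heq
        have hprod : (x - 814) * (x + 638) = 0 :=
          pow_eq_zero_iff (n := 2) (by norm_num) |>.mp key
        rcases mul_eq_zero.mp hprod with h | h
        · have hx814 : x = 814 := by linarith
          exact (hroots y).1 (by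
            rw [WeierstrassCurve.Affine.equation_iff]
            norm_num [Wex]
            nlinarith [heq, hx814])
        · have hx638 : x = -638 := by linarith
          exact (hroots y).2 (by
            rw [WeierstrassCurve.Affine.equation_iff]
            norm_num [Wex]
            nlinarith [heq, hx638])
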